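/- Let r > 1, let J be a quantum annulus unitary on a complex Hilbert space H with ‖J‖ = ‖J⁻¹‖ = r, and let A, B be bounded operators (not necessarily commuting) on a complex Hilbert space L. Then the operator C = A ⊗ J + B ⊗ (J*)⁻¹ on the Hilbert space tensor product L ⊗ H is an isometry (i.e. C*C = I) if and only if A*A = B*B and A*B + B*A + (r² + r⁻²)·A*A = I. -/

import Mathlib

set_option maxHeartbeats 800000 in
open ContinuousLinearMap in
/-- Let `J` be a quantum annulus unitary on a complex Hilbert space `H` with
`‖J‖ = ‖J⁻¹‖ = r`, and let `A, B` be bounded operators on a complex Hilbert space `L`.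
Let `K` together with the bilinear map `tensor` (with `⟪x⊗y, x'⊗y'⟫ = ⟪x,x'⟫⟪y,y'⟫` and dense
span of elementary tensors) be the Hilbert space tensor product `L ⊗ H`, and let
`C = A ⊗ J + B ⊗ (J*)⁻¹` (note `(J*)⁻¹ = adjoint (J⁻¹)`).  Then `C` is an isometry
(`C*C = I`) if and only if `A*A = B*B` and `A*B + B*A + (r²+r⁻²)·A*A = I`. -/
theorem tensor_isometry_iff
    {H L K : Type*}
    [NormedAddCommGroup H] [InnerProductSpace ℂ H] [CompleteSpace H]
    [NormedAddCommGroup L] [InnerProductSpace ℂ L] [CompleteSpace L]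
    [NormedAddCommGroup K] [InnerProductSpace ℂ K] [CompleteSpace K]
    (r : ℝ) (hr : 1 < r) (J : (H →L[ℂ] H)ˣ)
    (hJ : adjoint (J : H →L[ℂ] H) * (J : H →L[ℂ] H) +
        ((J⁻¹ : (H →L[ℂ] H)ˣ) : H →L[ℂ] H) *
          adjoint ((J⁻¹ : (H →L[ℂ] H)ˣ) : H →L[ℂ] H) =
      ((r ^ 2 + r⁻¹ ^ 2 : ℝ) : ℂ) • (1 : H →L[ℂ] H))
    (hJnorm : ‖(J : H →L[ℂ] H)‖ = r)
    (hJinvnorm : ‖((J⁻¹ : (H →L[ℂ] H)ˣ) : H →L[ℂ] H)‖ = r)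
    (A B : L →L[ℂ] L)
    (tensor : L →ₗ[ℂ] H →ₗ[ℂ] K)
    (htensor : ∀ (x x' : L) (y y' : H),
      (inner ℂ (tensor x y) (tensor x' y') : ℂ) = (inner ℂ x x' : ℂ) * (inner ℂ y y' : ℂ))
    (hdense : Dense (Submodule.span ℂ {k : K | ∃ x y, k = tensor x y} : Set K))
    (C : K →L[ℂ] K)
    (hC : ∀ (x : L) (y : H),
      C (tensor x y) =
        tensor (A x) ((J : H →L[ℂ] H) y) +
          tensor (B x) (adjoint ((J⁻¹ : (H →L[ℂ] H)ˣ) : H →L[ℂ] H) y)) :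
    adjoint C * C = 1 ↔
      (adjoint A * A = adjoint B * B ∧
        adjoint A * B + adjoint B * A +
          ((r ^ 2 + r⁻¹ ^ 2 : ℝ) : ℂ) • (adjoint A * A) = 1) := by
  have hr0 : (0:ℝ) < r := lt_trans one_pos hr
  set J' : H →L[ℂ] H := (J : H →L[ℂ] H) with hJ'def
  set Ji : H →L[ℂ] H := ((J⁻¹ : (H →L[ℂ] H)ˣ) : H →L[ℂ] H) with hJidef
  set s : ℂ := ((r ^ 2 + r⁻¹ ^ 2 : ℝ) : ℂ) with hsdef
  have hJiJ : Ji * J' = 1 := J.inv_mul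
  have hJJi : J' * Ji = 1 := J.mul_inv
  have hmix : Ji * adjoint Ji = s • 1 - adjoint J' * J' := eq_sub_of_add_eq' hJ
  set P : L →L[ℂ] L := adjoint A * A - adjoint B * B with hPdef
  set Q : L →L[ℂ] L := adjoint A * B + adjoint B * A + s • (adjoint B * B) - 1 with hQdef
  -- the key computation on elementary tensors
  have e1 : ∀ (u v : H), (inner ℂ (J' u) (adjoint Ji v) : ℂ) = inner ℂ u v := fun u v => by
    rw [adjoint_inner_right, ← ContinuousLinearMap.mul_apply, hJiJ, ContinuousLinearMap.one_apply]
  have e2 : ∀ (u v : H), (inner ℂ (adjoint Ji u) (J' v) : ℂ) = inner ℂ u v := fun u v => by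
    rw [adjoint_inner_left, ← ContinuousLinearMap.mul_apply, hJiJ, ContinuousLinearMap.one_apply]
  have e4 : ∀ (u v : H), (inner ℂ (adjoint Ji u) (adjoint Ji v) : ℂ)
      = s * inner ℂ u v - inner ℂ (J' u) (J' v) := fun u v => by
    rw [adjoint_inner_left, ← ContinuousLinearMap.mul_apply, hmix]
    simp only [sub_apply, smul_apply, ContinuousLinearMap.one_apply, inner_sub_right, inner_smul_right,
      ContinuousLinearMap.mul_apply, adjoint_inner_right]
  have main : ∀ (x x' : L) (y y' : H),
      (inner ℂ (C (tensor x y)) (C (tensor x' y')) : ℂ)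
        = inner ℂ x (P x') * inner ℂ (J' y) (J' y')
          + inner ℂ x (Q x') * inner ℂ y y' + inner ℂ x x' * inner ℂ y y' := by
    intro x x' y y'
    rw [hC, hC]
    simp only [inner_add_left, inner_add_right, htensor, e1, e2, e4, hPdef, hQdef,
      sub_apply, add_apply, smul_apply, ContinuousLinearMap.one_apply, ContinuousLinearMap.mul_apply, inner_sub_right,
      inner_smul_right, adjoint_inner_right]
    ring
  constructor
  · intro hCC
    have key : ∀ (x x' : L) (y y' : H),
        (inner ℂ x (P x') : ℂ) * inner ℂ (J' y) (J' y') + inner ℂ x (Q x') * inner ℂ y y' = 0 := by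
      intro x x' y y'
      have h1 : (inner ℂ (tensor x y : K) ((adjoint C * C) (tensor x' y')) : ℂ)
          = inner ℂ (C (tensor x y)) (C (tensor x' y')) := by
        rw [ContinuousLinearMap.mul_apply, adjoint_inner_right]
      rw [hCC, ContinuousLinearMap.one_apply, htensor, main] at h1
      linear_combination -h1
    have ptkey : ∀ (y : H) (x : L),
        ((‖J' y‖ : ℂ)^2) • P x + ((‖y‖ : ℂ)^2) • Q x = 0 := by
      intro y x
      have h : ((inner ℂ (J' y) (J' y) : ℂ)) • P + ((inner ℂ y y : ℂ)) • Q = 0 := by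
        refine ContinuousLinearMap.ext fun x' => ext_inner_left ℂ fun v => ?_
        simp only [ContinuousLinearMap.add_apply, ContinuousLinearMap.smul_apply,
          inner_add_right, inner_smul_right, ContinuousLinearMap.zero_apply,
          inner_zero_right]
        linear_combination key v x' y y
      have h2 := congrArg (fun T : L →L[ℂ] L => T x) h
      simp only [ContinuousLinearMap.add_apply, ContinuousLinearMap.smul_apply,
        ContinuousLinearMap.zero_apply] at h2
      rwa [inner_self_eq_norm_sq_to_K, inner_self_eq_norm_sq_to_K] at h2
    have hJne : J' ≠ 0 := by
      intro h0
      rw [h0, norm_zero] at hJnorm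
      linarith
    obtain ⟨y₀, hy₀⟩ : ∃ y : H, J' y ≠ 0 := by
      by_contra h
      push_neg at h
      exact hJne (ContinuousLinearMap.ext fun y => by simp [h y])
    have hy₀ne : y₀ ≠ 0 := fun h => hy₀ (by simp [h])
    have hy₀norm : 0 < ‖y₀‖ := norm_pos_iff.mpr hy₀ne
    have hP : P = 0 := by
      by_contra hPne
      obtain ⟨x₀, hx₀⟩ : ∃ x, P x ≠ 0 := by
        by_contra h
        push_neg at h
        exact hPne (ContinuousLinearMap.ext fun x => by simp [h x])
      -- the coefficient identity
      have hsqC : ∀ y : H,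
          ((‖J' y‖ : ℂ)^2 * (‖y₀‖ : ℂ)^2 - (‖J' y₀‖ : ℂ)^2 * (‖y‖ : ℂ)^2) • P x₀ = 0 := by
        intro y
        have h1 := ptkey y x₀
        have h2 := ptkey y₀ x₀
        have e : ((‖J' y‖ : ℂ)^2 * (‖y₀‖ : ℂ)^2 - (‖J' y₀‖ : ℂ)^2 * (‖y‖ : ℂ)^2) • P x₀
            = ((‖y₀‖ : ℂ)^2) • (((‖J' y‖ : ℂ)^2) • P x₀ + ((‖y‖ : ℂ)^2) • Q x₀)
              - ((‖y‖ : ℂ)^2) • (((‖J' y₀‖ : ℂ)^2) • P x₀ + ((‖y₀‖ : ℂ)^2) • Q x₀) := by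
          module
        rw [e, h1, h2, smul_zero, smul_zero, sub_zero]
      have hsqR : ∀ y : H, ‖J' y‖^2 * ‖y₀‖^2 = ‖J' y₀‖^2 * ‖y‖^2 := by
        intro y
        rcases smul_eq_zero.mp (hsqC y) with h | h
        · have : ((‖J' y‖^2 * ‖y₀‖^2 - ‖J' y₀‖^2 * ‖y‖^2 : ℝ) : ℂ) = 0 := by
            push_cast
            linear_combination h
          have h3 : (‖J' y‖^2 * ‖y₀‖^2 - ‖J' y₀‖^2 * ‖y‖^2 : ℝ) = 0 := by
            exact_mod_cast this
          linarith
        · exact absurd h hx₀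
      set c : ℝ := ‖J' y₀‖ / ‖y₀‖ with hc
      have hcnn : 0 ≤ c := div_nonneg (norm_nonneg _) (norm_nonneg _)
      have hnormc : ∀ y : H, ‖J' y‖ = c * ‖y‖ := by
        intro y
        have h2 : (‖J' y‖ * ‖y₀‖)^2 = (‖J' y₀‖ * ‖y‖)^2 := by
          have := hsqR y; rw [mul_pow, mul_pow]; exact this
        have h3 : ‖J' y‖ * ‖y₀‖ = ‖J' y₀‖ * ‖y‖ := by
          have ha : (0:ℝ) ≤ ‖J' y‖ * ‖y₀‖ := by positivity
          have hb : (0:ℝ) ≤ ‖J' y₀‖ * ‖y‖ := by positivity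
          calc ‖J' y‖ * ‖y₀‖ = Real.sqrt ((‖J' y‖ * ‖y₀‖)^2) := (Real.sqrt_sq ha).symm
            _ = Real.sqrt ((‖J' y₀‖ * ‖y‖)^2) := by rw [h2]
            _ = ‖J' y₀‖ * ‖y‖ := Real.sqrt_sq hb
        rw [hc]
        field_simp
        linarith [h3]
      have hJle : ‖J'‖ ≤ c :=
        ContinuousLinearMap.opNorm_le_bound _ hcnn fun y => le_of_eq (hnormc y)
      have hcle : c ≤ ‖J'‖ := by
        rw [hc, div_le_iff₀ hy₀norm]
        exact J'.le_opNorm y₀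
      have hcr : c = r := by rw [← hJnorm]; exact le_antisymm hcle hJle
      have hJiz : ∀ z : H, ‖Ji z‖ ≤ (1/r) * ‖z‖ := by
        intro z
        have h1 : ‖J' (Ji z)‖ = c * ‖Ji z‖ := hnormc (Ji z)
        have h2 : J' (Ji z) = z := by rw [← ContinuousLinearMap.mul_apply, hJJi, ContinuousLinearMap.one_apply]
        rw [h2, hcr] at h1
        rw [h1]
        rw [one_div]
        field_simp
        exact le_rfl
      have hfin : ‖Ji‖ ≤ 1/r :=
        ContinuousLinearMap.opNorm_le_bound _ (by positivity) hJiz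
      rw [hJinvnorm] at hfin
      have hsq : r * r ≤ 1 := by
        rw [← le_div_iff₀ hr0]
        exact hfin
      nlinarith
    have hQ : Q = 0 := by
      ext x
      have h := ptkey y₀ x
      rw [hP] at h
      simp only [ContinuousLinearMap.zero_apply, smul_zero, zero_add] at h
      rcases smul_eq_zero.mp h with h | h
      · exfalso
        have : (‖y₀‖ : ℂ) ≠ 0 := by
          simpa using hy₀ne
        exact (pow_ne_zero 2 this) h
      · simpa using h
    rw [hPdef] at hP
    rw [hQdef] at hQ
    have h1 : adjoint A * A = adjoint B * B := sub_eq_zero.mp hP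
    have h2 : adjoint A * B + adjoint B * A + s • (adjoint B * B) = 1 := sub_eq_zero.mp hQ
    refine ⟨h1, ?_⟩
    rw [h1]
    exact h2
  · rintro ⟨h1, h2⟩
    have hP : P = 0 := by rw [hPdef, h1, sub_self]
    have hQ : Q = 0 := by rw [hQdef, ← h1, h2, sub_self]
    have horth : (Submodule.span ℂ {k : K | ∃ x y, k = tensor x y})ᗮ = ⊥ := by
      rw [← Submodule.topologicalClosure_eq_top_iff]
      exact Submodule.dense_iff_topologicalClosure_eq_top.mp hdense
    have hbase : ∀ (x' : L) (y' : H) (x : L) (y : H),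
        (inner ℂ (tensor x y : K) ((adjoint C * C) (tensor x' y') - tensor x' y') : ℂ) = 0 := by
      intro x' y' x y
      have hm := main x x' y y'
      rw [hP, hQ] at hm
      simp only [ContinuousLinearMap.zero_apply, inner_zero_right, zero_mul, zero_add] at hm
      have hadj : (inner ℂ (tensor x y : K) ((adjoint C * C) (tensor x' y')) : ℂ)
          = inner ℂ (C (tensor x y)) (C (tensor x' y')) := by
        rw [ContinuousLinearMap.mul_apply, adjoint_inner_right]
      rw [inner_sub_right, hadj, hm, htensor, sub_self]
    have hzero : ∀ (x' : L) (y' : H), (adjoint C * C) (tensor x' y') = tensor x' y' := by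
      intro x' y'
      have hw : ((adjoint C * C) (tensor x' y') - tensor x' y')
          ∈ (Submodule.span ℂ {k : K | ∃ x y, k = tensor x y})ᗮ := by
        rw [Submodule.mem_orthogonal]
        intro u hu
        induction hu using Submodule.span_induction with
        | mem u hu => obtain ⟨x, y, rfl⟩ := hu; exact hbase x' y' x y
        | zero => simp
        | add u v hu hv ihu ihv => rw [inner_add_left, ihu, ihv, add_zero]
        | smul a u hu ihu => rw [inner_smul_left, ihu, mul_zero]
      rw [horth, Submodule.mem_bot, sub_eq_zero] at hw
      exact hw
    have heq : Set.EqOn (⇑(adjoint C * C)) (⇑(1 : K →L[ℂ] K))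
        (Submodule.span ℂ {k : K | ∃ x y, k = tensor x y} : Set K) := by
      intro k hk
      induction hk using Submodule.span_induction with
      | mem k hk => obtain ⟨x, y, rfl⟩ := hk; simpa using hzero x y
      | zero => simp
      | add u v hu hv ihu ihv => simp only [map_add, ihu, ihv]
      | smul a u hu ihu => simp only [map_smul, ihu]
    exact ContinuousLinearMap.coeFn_injective
      (Continuous.ext_on hdense (adjoint C * C).continuous (1 : K →L[ℂ] K).continuous heq)
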